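/- Let α ≥ 0, β > 0, 1 < r < 2 and R > 0 with R^{r−1} > α/(β(2−r)). Set M* = βR^{r−1} − α (which is positive). Then for every M > 0, min( M β^{1/(r−1)} (α+M)^{−1/(r−1)}, M/R ) ≤ M*/R = R^{−1}(βR^{r−1} − α), with equality when M = M*. In particular, sup_{M>0} min( M β^{1/(r−1)} (α+M)^{−1/(r−1)}, M/R ) = R^{−1}(βR^{r−1} − α), attained at M = M*. -/

import Mathlib

open Real Set

/-- case `1 < r < 2`, `R^{r−1} > α/(β(2−r))`: with `M* = βR^{r−1} − α > 0`,
`min(f(M), M/R) ≤ M*/R = R⁻¹(βR^{r−1} − α)` for all `M > 0` with equality at `M = M*`;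
in particular the supremum is `R⁻¹(βR^{r−1} − α)`, attained at `M*`. -/
theorem stmt3 (α β r R : ℝ) (hα : 0 ≤ α) (hβ : 0 < β) (hr1 : 1 < r) (hr2 : r < 2)
    (hR : 0 < R) (hcond : α / (β * (2 - r)) < R ^ (r - 1)) :
    0 < β * R ^ (r - 1) - α ∧
    (∀ M : ℝ, 0 < M →
      min (M * β ^ (1 / (r - 1)) * (α + M) ^ (-(1 / (r - 1)))) (M / R)
        ≤ R⁻¹ * (β * R ^ (r - 1) - α)) ∧
    min ((β * R ^ (r - 1) - α) * β ^ (1 / (r - 1)) *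
          (α + (β * R ^ (r - 1) - α)) ^ (-(1 / (r - 1))))
        ((β * R ^ (r - 1) - α) / R) = R⁻¹ * (β * R ^ (r - 1) - α) ∧
    IsGreatest
      ((fun M : ℝ => min (M * β ^ (1 / (r - 1)) * (α + M) ^ (-(1 / (r - 1)))) (M / R)) ''
        Set.Ioi 0)
      (R⁻¹ * (β * R ^ (r - 1) - α)) := by
  have hr1' : 0 < r - 1 := by linarith
  set q : ℝ := 1 / (r - 1) with hq_def
  have hq1 : 1 < q := by
    rw [hq_def, lt_div_iff₀ hr1']; linarith
  have hq0 : 0 < q := by linarith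
  have hRr : 0 < R ^ (r - 1) := rpow_pos_of_pos hR _
  have hcond' : α < β * (2 - r) * R ^ (r - 1) := by
    have h := (div_lt_iff₀ (by nlinarith : (0:ℝ) < β * (2 - r))).mp hcond
    nlinarith
  have hMs : 0 < β * R ^ (r - 1) - α := by nlinarith
  set Ms : ℝ := β * R ^ (r - 1) - α with hMs_def
  have hαMs : α + Ms = β * R ^ (r - 1) := by rw [hMs_def]; ring
  have hαMs_pos : 0 < α + Ms := by rw [hαMs]; positivity
  -- (q-1) * Ms ≥ α
  have hkey : α ≤ (q - 1) * Ms := by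
    have hq' : q - 1 = (2 - r) / (r - 1) := by
      rw [hq_def]; field_simp; ring
    rw [hq', div_mul_eq_mul_div, le_div_iff₀ hr1']
    nlinarith
  -- f(Ms) = Ms / R
  have hfMs : Ms * β ^ q * (α + Ms) ^ (-q) = Ms / R := by
    rw [hαMs, mul_rpow hβ.le hRr.le, ← rpow_mul hR.le,
      show (r - 1) * (-q) = -1 by rw [hq_def]; field_simp, rpow_neg_one]
    have hb : β ^ q * β ^ (-q) = 1 := by
      rw [← rpow_add hβ]; simp
    field_simp
    nlinarith [hb, rpow_pos_of_pos hβ q, rpow_pos_of_pos hβ (-q)]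
  -- main bound
  have key : ∀ M : ℝ, 0 < M →
      min (M * β ^ q * (α + M) ^ (-q)) (M / R) ≤ R⁻¹ * Ms := by
    intro M hM
    rcases le_total M Ms with h | h
    · refine le_trans (min_le_right _ _) ?_
      rw [inv_mul_eq_div]
      gcongr
    · refine le_trans (min_le_left _ _) ?_
      rw [show R⁻¹ * Ms = Ms / R by rw [inv_mul_eq_div], ← hfMs]
      have hαM : 0 < α + M := by linarith
      set s : ℝ := (M - Ms) / (α + Ms) with hs_def
      have hs0 : 0 ≤ s := div_nonneg (by linarith) hαMs_pos.le
      have hbern : 1 + q * s ≤ (1 + s) ^ q :=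
        one_add_mul_self_le_rpow_one_add (by linarith) hq1.le
      have hsplit : α + M = (α + Ms) * (1 + s) := by
        rw [hs_def]; field_simp; ring
      have hMle : M ≤ Ms * (1 + q * s) := by
        rw [← sub_nonneg,
          show Ms * (1 + q * s) - M = ((q - 1) * Ms - α) * (M - Ms) / (α + Ms) by
            rw [hs_def]; field_simp; ring]
        exact div_nonneg (mul_nonneg (by linarith) (by linarith)) hαMs_pos.le
      have hB := rpow_pos_of_pos hαMs_pos q
      have hA := rpow_pos_of_pos hαM q
      have h1 : M * (α + Ms) ^ q ≤ Ms * (α + M) ^ q := by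
        rw [hsplit, mul_rpow hαMs_pos.le (by linarith : (0:ℝ) ≤ 1 + s)]
        have h2 : Ms * (1 + q * s) ≤ Ms * (1 + s) ^ q := by
          exact mul_le_mul_of_nonneg_left hbern hMs.le
        nlinarith
      rw [rpow_neg hαM.le, rpow_neg hαMs_pos.le, mul_inv_le_iff₀ hA]
      have h2 := mul_le_mul_of_nonneg_right
        (mul_le_mul_of_nonneg_right h1 (rpow_pos_of_pos hβ q).le)
        (inv_nonneg.mpr hB.le)
      rw [show M * (α + Ms) ^ q * β ^ q * ((α + Ms) ^ q)⁻¹ = M * β ^ q from by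
        field_simp] at h2
      rw [show Ms * (α + M) ^ q * β ^ q * ((α + Ms) ^ q)⁻¹
          = Ms * β ^ q * ((α + Ms) ^ q)⁻¹ * (α + M) ^ q from by ring] at h2
      exact h2
  refine ⟨hMs, key, ?_, ?_, ?_⟩
  · rw [hfMs, min_self, inv_mul_eq_div]
  · exact ⟨Ms, hMs, by simp only []; rw [hfMs, min_self, inv_mul_eq_div]⟩
  · rintro y ⟨M, hM, rfl⟩
    exact key M hM
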